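/- Pólya urn scheme for the MRF-constrained MFM (Theorem 1): under the prior P(z|q) ∝ (∏_i q_{z_i}) exp(d Σ_{i<i'} g_{ii'} 1(z_i=z_{i'})), q|K ~ Dir(α_0,...,α_0), K−1 ~ Poisson(λ), the conditional prior of assigning point i satisfies P(z_i = k | z_{−i}) ∝ (n_{k,−i} + α_0) exp(d Σ_{i'} g_{ii'} 1(z_{i'} = k)) for an existing cluster k, and ∝ α_0 · V_n(|z_{−i}|+1)/V_n(|z_{−i}|) for a new cluster, where n_{k,−i} is the size of cluster k excluding i and V_n(t) = Σ_K [C(K,t) t!/(Kα_0)^{(n)}] P(K). -/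

import Mathlib

open Finset

/-- The unordered partition of `{1,...,n}` induced by a labeling `z`. -/
def partitionOf {n : ℕ} {α : Type*} [DecidableEq α] (z : Fin n → α) :
    Finset (Finset (Fin n)) :=
  Finset.univ.image (fun i => Finset.univ.filter (fun i' => z i' = z i))

/-- The rising factorial `x^{(m)} = Γ(x+m)/Γ(x)`. -/
noncomputable def risingGamma (x : ℝ) (m : ℕ) : ℝ := Real.Gamma (x + m) / Real.Gamma x

/-- Marginal prior mass of a partition `𝒞` under the MRF-constrained MFM model
`P(z|q) ∝ (∏_i q_{z_i}) exp(d Σ_{i<i'} g_{ii'} 1(z_i=z_{i'}))`,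
`q | K ~ Dir(α_0,...,α_0)`, `K − 1 ~ Poisson(λ)`: we mix over `K` (the index `K : ℕ`
corresponding to `K+1` components), marginalize `q`, and sum over labelings inducing `𝒞`. -/
noncomputable def mrfMfmMass (n : ℕ) (α0 d lam : ℝ) (g : Fin n → Fin n → ℝ)
    (𝒞 : Finset (Finset (Fin n))) : ℝ :=
  ∑' K : ℕ, (Real.exp (-lam) * lam ^ K / (Nat.factorial K : ℝ)) *
    ∑ z ∈ Finset.univ.filter (fun z : Fin n → Fin (K + 1) => partitionOf z = 𝒞),
      (Real.Gamma (((K : ℝ) + 1) * α0) / Real.Gamma ((n : ℝ) + ((K : ℝ) + 1) * α0)) *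
        (∏ l : Fin (K + 1), risingGamma α0 (Finset.univ.filter (fun i => z i = l)).card) *
        Real.exp (d * ∑ i, ∑ i', if i < i' ∧ z i = z i' then g i i' else 0)

/-- The MFM coefficient `V_n(t) = Σ_K [C(K,t) t!/(Kα_0)^{(n)}] P(K)` with
`K − 1 ~ Poisson(λ)` (index `K : ℕ` corresponding to `K+1` components). -/
noncomputable def Vcoef (n : ℕ) (α0 lam : ℝ) (t : ℕ) : ℝ :=
  ∑' K : ℕ, ((K + 1).descFactorial t : ℝ) / risingGamma (((K : ℝ) + 1) * α0) n *
    (Real.exp (-lam) * lam ^ K / (Nat.factorial K : ℝ))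

/-! ### Auxiliary lemmas -/

lemma risingGamma_zero {x : ℝ} (hx : 0 < x) : risingGamma x 0 = 1 := by
  simp [risingGamma, div_self (Real.Gamma_pos_of_pos hx).ne']

lemma risingGamma_succ {x : ℝ} (hx : 0 < x) (m : ℕ) :
    risingGamma x (m + 1) = risingGamma x m * (x + m) := by
  have h1 : (x + (m:ℝ)) ≠ 0 := by positivity
  have : (x + ((m:ℝ)+1)) = (x + m) + 1 := by ring
  rw [risingGamma, risingGamma]
  push_cast
  rw [this, Real.Gamma_add_one h1]
  ring

lemma risingGamma_pos {x : ℝ} (hx : 0 < x) (m : ℕ) : 0 < risingGamma x m := by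
  induction m with
  | zero => rw [risingGamma_zero hx]; norm_num
  | succ m ih => rw [risingGamma_succ hx]; positivity

lemma risingGamma_one {x : ℝ} (hx : 0 < x) : risingGamma x 1 = x := by
  rw [show (1:ℕ) = 0 + 1 from rfl, risingGamma_succ hx, risingGamma_zero hx]; simp

lemma pow_le_risingGamma {x : ℝ} (hx : 0 < x) (m : ℕ) : x ^ m ≤ risingGamma x m := by
  induction m with
  | zero => rw [risingGamma_zero hx]; norm_num
  | succ m ih =>
    rw [risingGamma_succ hx, pow_succ]
    have h1 : x ≤ x + m := by
      have : (0:ℝ) ≤ m := Nat.cast_nonneg m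
      linarith
    have h2 : (0:ℝ) < x ^ m := pow_pos hx m
    nlinarith [risingGamma_pos hx m]

lemma partitionOf_blocks {n : ℕ} {α β : Type*} [DecidableEq α] [DecidableEq β]
    {z : Fin n → α} {w : Fin n → β} (h : partitionOf z = partitionOf w) (a : Fin n) :
    Finset.univ.filter (fun b => z b = z a) = Finset.univ.filter (fun b => w b = w a) := by
  have hmem : Finset.univ.filter (fun b => z b = z a) ∈ partitionOf w := by
    rw [← h]; exact Finset.mem_image_of_mem _ (Finset.mem_univ a)
  obtain ⟨c, -, hc⟩ := Finset.mem_image.mp hmem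
  have ha : a ∈ Finset.univ.filter (fun b => w b = w c) := by
    rw [hc]; simp
  have hwa : w a = w c := (Finset.mem_filter.mp ha).2
  rw [← hc]
  ext b
  simp [hwa]

lemma partitionOf_iff {n : ℕ} {α β : Type*} [DecidableEq α] [DecidableEq β]
    {z : Fin n → α} {w : Fin n → β} (h : partitionOf z = partitionOf w) (a b : Fin n) :
    z a = z b ↔ w a = w b := by
  have hb := partitionOf_blocks h b
  constructor
  · intro hz
    have : a ∈ Finset.univ.filter (fun x => w x = w b) := by
      rw [← hb]; simp [hz]
    exact (Finset.mem_filter.mp this).2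
  · intro hw
    have : a ∈ Finset.univ.filter (fun x => z x = z b) := by
      rw [hb]; simp [hw]
    exact (Finset.mem_filter.mp this).2

lemma partitionOf_congr {n : ℕ} {α β : Type*} [DecidableEq α] [DecidableEq β]
    {z : Fin n → α} {w : Fin n → β} (h : ∀ a b, z a = z b ↔ w a = w b) :
    partitionOf z = partitionOf w := by
  unfold partitionOf
  apply Finset.image_congr
  intro a _
  ext b
  simp [h]

lemma partitionOf_eq_image_image {n : ℕ} {α : Type*} [DecidableEq α] (w : Fin n → α) :
    partitionOf w = (Finset.univ.image w).image
      (fun v => Finset.univ.filter (fun b => w b = v)) := by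
  rw [partitionOf, Finset.image_image]
  rfl

lemma filter_injOn {n : ℕ} {α : Type*} [DecidableEq α] (w : Fin n → α) :
    Set.InjOn (fun v => Finset.univ.filter (fun b => w b = v))
      (Finset.univ.image w : Finset α) := by
  intro v hv v' hv' h
  obtain ⟨a, -, ha⟩ := Finset.mem_image.mp hv
  have : a ∈ Finset.univ.filter (fun b => w b = v) := by simp [ha]
  simp only [] at h
  rw [h] at this
  have := (Finset.mem_filter.mp this).2
  rw [← ha, this]

lemma card_partitionOf {n : ℕ} {α : Type*} [DecidableEq α] (w : Fin n → α) :
    (partitionOf w).card = (Finset.univ.image w).card := by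
  rw [partitionOf_eq_image_image]
  exact Finset.card_image_of_injOn (filter_injOn w)

/-- pick a preimage of an element of the image -/
noncomputable def pick {n : ℕ} {α : Type*} [DecidableEq α] (w : Fin n → α)
    (v : ↥(Finset.univ.image w)) : Fin n :=
  (Finset.mem_image.mp v.2).choose

lemma pick_spec {n : ℕ} {α : Type*} [DecidableEq α] (w : Fin n → α)
    (v : ↥(Finset.univ.image w)) : w (pick w v) = v.1 :=
  (Finset.mem_image.mp v.2).choose_spec.2

noncomputable def labelEquiv {n : ℕ} {α β : Type*} [DecidableEq α] [DecidableEq β]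
    (w : Fin n → α) :
    {z : Fin n → β // partitionOf z = partitionOf w} ≃
      (↥(Finset.univ.image w) ↪ β) where
  toFun z' := ⟨fun v => z'.1 (pick w v), by
    intro v v' h
    have := (partitionOf_iff z'.2 (pick w v) (pick w v')).mp h
    rw [pick_spec w v, pick_spec w v'] at this
    exact Subtype.ext this⟩
  invFun f := ⟨fun a => f ⟨w a, Finset.mem_image_of_mem w (Finset.mem_univ a)⟩, by
    apply partitionOf_congr
    intro a b
    constructor
    · intro h
      have := f.injective h
      exact congrArg Subtype.val this
    · intro h
      congr 1
      exact Subtype.ext h⟩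
  left_inv := by
    rintro ⟨z', hz'⟩
    ext a
    simp only
    have h1 : w (pick w ⟨w a, Finset.mem_image_of_mem w (Finset.mem_univ a)⟩) = w a :=
      pick_spec w _
    exact (partitionOf_iff hz' _ a).mpr h1
  right_inv := by
    intro f
    ext v
    simp only [Function.Embedding.coeFn_mk]
    congr 1
    exact DFunLike.ext _ _ (fun u => congrArg f (Subtype.ext (pick_spec w u)))

lemma count_labelings {n : ℕ} {α β : Type*} [DecidableEq α] [DecidableEq β] [Fintype β]
    (w : Fin n → α) [DecidableEq (Fin n → β)] :
    (Finset.univ.filter (fun z : Fin n → β => partitionOf z = partitionOf w)).card =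
      (Fintype.card β).descFactorial (Finset.univ.image w).card := by
  have h1 : (Finset.univ.image w).card = Fintype.card ↥(Finset.univ.image w) :=
    (Fintype.card_coe _).symm
  rw [h1, ← Fintype.card_embedding_eq,
    ← Fintype.card_congr (labelEquiv (β := β) w), Fintype.card_subtype]

lemma prod_fibers {n : ℕ} {β : Type*} [DecidableEq β] [Fintype β] (z : Fin n → β)
    (F : ℕ → ℝ) (hF0 : F 0 = 1) :
    ∏ l : β, F (Finset.univ.filter (fun i => z i = l)).card =
      ∏ c ∈ partitionOf z, F c.card := by
  rw [partitionOf_eq_image_image,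
    Finset.prod_image (fun x hx y hy h => filter_injOn z hx hy h)]
  rw [← Finset.prod_subset (Finset.subset_univ (Finset.univ.image z))]
  intro x _ hx
  have : Finset.univ.filter (fun b => z b = x) = ∅ := by
    rw [Finset.filter_eq_empty_iff]
    intro b _
    exact fun h => hx (h ▸ Finset.mem_image_of_mem z (Finset.mem_univ b))
  rw [this]
  simpa using hF0

noncomputable def Ew {n : ℕ} {α : Type*} [DecidableEq α] (g : Fin n → Fin n → ℝ)
    (w : Fin n → α) : ℝ :=
  ∑ a : Fin n, ∑ b : Fin n, if a < b ∧ w a = w b then g a b else 0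

lemma mass_formula (n : ℕ) (α0 d lam : ℝ) (hα0 : 0 < α0)
    (g : Fin n → Fin n → ℝ) (w : Fin n → ℕ) :
    mrfMfmMass n α0 d lam g (partitionOf w) =
      Vcoef n α0 lam (partitionOf w).card *
        ((∏ c ∈ partitionOf w, risingGamma α0 c.card) * Real.exp (d * Ew g w)) := by
  have key : ∀ K : ℕ,
      (Real.exp (-lam) * lam ^ K / (Nat.factorial K : ℝ)) *
      ∑ z ∈ Finset.univ.filter (fun z : Fin n → Fin (K + 1) => partitionOf z = partitionOf w),
        (Real.Gamma (((K : ℝ) + 1) * α0) / Real.Gamma ((n : ℝ) + ((K : ℝ) + 1) * α0)) *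
          (∏ l : Fin (K + 1), risingGamma α0 (Finset.univ.filter (fun i => z i = l)).card) *
          Real.exp (d * ∑ i, ∑ i', if i < i' ∧ z i = z i' then g i i' else 0) =
      (((K + 1).descFactorial (partitionOf w).card : ℝ) / risingGamma (((K : ℝ) + 1) * α0) n *
        (Real.exp (-lam) * lam ^ K / (Nat.factorial K : ℝ))) *
      ((∏ c ∈ partitionOf w, risingGamma α0 c.card) * Real.exp (d * Ew g w)) := by
    intro K
    have hsum : ∀ z ∈ Finset.univ.filter
        (fun z : Fin n → Fin (K + 1) => partitionOf z = partitionOf w),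
        (Real.Gamma (((K : ℝ) + 1) * α0) / Real.Gamma ((n : ℝ) + ((K : ℝ) + 1) * α0)) *
          (∏ l : Fin (K + 1), risingGamma α0 (Finset.univ.filter (fun i => z i = l)).card) *
          Real.exp (d * ∑ i, ∑ i', if i < i' ∧ z i = z i' then g i i' else 0) =
        (Real.Gamma (((K : ℝ) + 1) * α0) / Real.Gamma ((n : ℝ) + ((K : ℝ) + 1) * α0)) *
          (∏ c ∈ partitionOf w, risingGamma α0 c.card) * Real.exp (d * Ew g w) := by
      intro z hz
      have hz' := (Finset.mem_filter.mp hz).2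
      congr 1
      · congr 1
        rw [prod_fibers z _ (risingGamma_zero hα0), hz']
      · congr 2
        unfold Ew
        apply Finset.sum_congr rfl
        intro a _
        apply Finset.sum_congr rfl
        intro b _
        have := partitionOf_iff hz' a b
        by_cases hab : a < b
        · simp [hab, this]
        · simp [hab]
    rw [Finset.sum_congr rfl hsum, Finset.sum_const, count_labelings w]
    have hG : (Real.Gamma (((K : ℝ) + 1) * α0) / Real.Gamma ((n : ℝ) + ((K : ℝ) + 1) * α0))
        = 1 / risingGamma (((K : ℝ) + 1) * α0) n := by
      rw [risingGamma, one_div_div, add_comm ((n:ℝ))]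
    rw [hG, Fintype.card_fin, card_partitionOf, nsmul_eq_mul]
    ring
  unfold mrfMfmMass Vcoef
  rw [tsum_congr key, tsum_mul_right]

lemma Vcoef_pos (n : ℕ) {α0 lam : ℝ} (hα0 : 0 < α0) (hlam : 0 < lam) {t : ℕ}
    (ht : t ≤ n) : 0 < Vcoef n α0 lam t := by
  set f : ℕ → ℝ := fun K => ((K + 1).descFactorial t : ℝ) /
    risingGamma (((K : ℝ) + 1) * α0) n * (Real.exp (-lam) * lam ^ K / (Nat.factorial K : ℝ))
    with hf
  have hpos : ∀ K : ℕ, 0 < (((K:ℝ) + 1) * α0) := by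
    intro K; positivity
  have hnonneg : ∀ K, 0 ≤ f K := by
    intro K
    apply mul_nonneg
    · apply div_nonneg (Nat.cast_nonneg _) (risingGamma_pos (hpos K) n).le
    · positivity
  have hsum2 : Summable (fun K : ℕ =>
      (Real.exp (-lam) / α0 ^ n) * (lam ^ K / (Nat.factorial K : ℝ))) :=
    (Real.summable_pow_div_factorial lam).mul_left _
  have hsummable : Summable f := by
    refine Summable.of_nonneg_of_le hnonneg ?_ hsum2
    · intro K
      have h1 : ((K + 1).descFactorial t : ℝ) ≤ ((K:ℝ) + 1) ^ n := by
        calc ((K + 1).descFactorial t : ℝ) ≤ ((K + 1) ^ t : ℕ) := by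
              exact_mod_cast Nat.descFactorial_le_pow _ _
          _ ≤ ((K + 1) ^ n : ℕ) := by
              exact_mod_cast Nat.pow_le_pow_right (Nat.succ_le_succ (Nat.zero_le K)) ht
          _ = ((K:ℝ) + 1) ^ n := by push_cast; ring
      have h2 : (((K:ℝ) + 1) * α0) ^ n ≤ risingGamma (((K : ℝ) + 1) * α0) n :=
        pow_le_risingGamma (hpos K) n
      have h3 : ((K + 1).descFactorial t : ℝ) / risingGamma (((K : ℝ) + 1) * α0) n
          ≤ 1 / α0 ^ n := by
        rw [div_le_div_iff₀ (risingGamma_pos (hpos K) n) (by positivity)]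
        calc ((K + 1).descFactorial t : ℝ) * α0 ^ n ≤ ((K:ℝ) + 1) ^ n * α0 ^ n := by
              apply mul_le_mul_of_nonneg_right h1 (by positivity)
          _ = (((K:ℝ) + 1) * α0) ^ n := by rw [mul_pow]
          _ ≤ 1 * risingGamma (((K : ℝ) + 1) * α0) n := by rw [one_mul]; exact h2
      calc f K ≤ (1 / α0 ^ n) * (Real.exp (-lam) * lam ^ K / (Nat.factorial K : ℝ)) := by
            apply mul_le_mul_of_nonneg_right h3 (by positivity)
        _ = (Real.exp (-lam) / α0 ^ n) * (lam ^ K / (Nat.factorial K : ℝ)) := by ring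
  have hft : 0 < f t := by
    have hd : 0 < (t + 1).descFactorial t := Nat.pos_of_ne_zero (fun h =>
      absurd (Nat.descFactorial_eq_zero_iff_lt.mp h) (by omega))
    have h1 : (0:ℝ) < ((t + 1).descFactorial t : ℝ) := by exact_mod_cast hd
    have h2 := risingGamma_pos (hpos t) n
    positivity
  exact Summable.tsum_pos hsummable hnonneg t hft

def blocksOf {n : ℕ} (i : Fin n) (z : Fin n → ℕ) : Finset (Finset (Fin n)) :=
  (Finset.univ.erase i).image
    (fun j => (Finset.univ.erase i).filter (fun j' => z j' = z j))

def clusterOf {n : ℕ} (i : Fin n) (z : Fin n → ℕ) (k : ℕ) : Finset (Fin n) :=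
  (Finset.univ.erase i).filter (fun j => z j = k)

section
variable {n : ℕ} (i : Fin n) (z : Fin n → ℕ) (k : ℕ)

lemma card_blocksOf : (blocksOf i z).card = ((Finset.univ.erase i).image z).card := by
  have h1 : blocksOf i z = ((Finset.univ.erase i).image z).image
      (fun v => (Finset.univ.erase i).filter (fun j' => z j' = v)) := by
    rw [blocksOf, Finset.image_image]; rfl
  rw [h1]
  apply Finset.card_image_of_injOn
  intro v hv v' hv' h
  simp only [Finset.coe_image, Set.mem_image] at hv
  obtain ⟨a, ha, hav⟩ := hv
  have hmem : a ∈ (Finset.univ.erase i).filter (fun j' => z j' = v) := by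
    simp only [Finset.mem_filter]
    exact ⟨by exact_mod_cast ha, hav⟩
  simp only [] at h
  rw [h] at hmem
  have := (Finset.mem_filter.mp hmem).2
  rw [← hav, this]

lemma not_mem_blocksOf {c : Finset (Fin n)} (hc : c ∈ blocksOf i z) : i ∉ c := by
  obtain ⟨a, ha, hac⟩ := Finset.mem_image.mp hc
  intro hi
  rw [← hac] at hi
  exact (Finset.mem_erase.mp (Finset.mem_filter.mp hi).1).1 rfl

lemma partitionOf_eq_insert_image (w : Fin n → ℕ) :
    partitionOf w = insert (Finset.univ.filter (fun b => w b = w i))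
      ((Finset.univ.erase i).image
        (fun a => Finset.univ.filter (fun b => w b = w a))) := by
  have h : partitionOf w = Finset.image
      (fun a => Finset.univ.filter (fun b => w b = w a)) (insert i (Finset.univ.erase i)) := by
    rw [Finset.insert_erase (Finset.mem_univ i)]; rfl
  rw [h, Finset.image_insert]

lemma partition_update_new (hk : ∀ j ∈ Finset.univ.erase i, z j ≠ k) :
    partitionOf (Function.update z i k) = insert {i} (blocksOf i z) := by
  set w := Function.update z i k with hw
  have hwi : w i = k := Function.update_self i k z
  have hwj : ∀ j, j ≠ i → w j = z j := fun j hj => Function.update_of_ne hj k z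
  have hblocki : Finset.univ.filter (fun b => w b = w i) = {i} := by
    ext b
    simp only [Finset.mem_filter, Finset.mem_univ, true_and, Finset.mem_singleton, hwi]
    constructor
    · intro hb
      by_contra hbi
      exact hk b (Finset.mem_erase.mpr ⟨hbi, Finset.mem_univ b⟩) (by rw [← hwj b hbi]; exact hb)
    · rintro rfl; exact hwi
  have hblockj : ∀ a, a ≠ i → Finset.univ.filter (fun b => w b = w a) =
      (Finset.univ.erase i).filter (fun j' => z j' = z a) := by
    intro a hai
    ext b
    simp only [Finset.mem_filter, Finset.mem_univ, true_and, Finset.mem_erase, and_true]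
    constructor
    · intro hb
      have hbi : b ≠ i := by
        rintro rfl
        rw [hwi, hwj a hai] at hb
        exact hk a (Finset.mem_erase.mpr ⟨hai, Finset.mem_univ a⟩) hb.symm
      rw [hwj b hbi, hwj a hai] at hb
      exact ⟨hbi, hb⟩
    · rintro ⟨hbi, hb⟩
      rw [hwj b hbi, hwj a hai]
      exact hb
  rw [partitionOf_eq_insert_image i w, hblocki, blocksOf]
  congr 1
  apply Finset.image_congr
  intro a ha
  exact hblockj a (Finset.mem_erase.mp ha).1

lemma partition_update_existing (hk : ∃ j ∈ Finset.univ.erase i, z j = k) :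
    partitionOf (Function.update z i k) =
      insert (insert i (clusterOf i z k)) ((blocksOf i z).erase (clusterOf i z k)) := by
  obtain ⟨j₀, hj₀S, hj₀⟩ := hk
  set w := Function.update z i k with hw
  have hwi : w i = k := Function.update_self i k z
  have hwj : ∀ j, j ≠ i → w j = z j := fun j hj => Function.update_of_ne hj k z
  have hblockk : ∀ a, w a = k → Finset.univ.filter (fun b => w b = w a) =
      insert i (clusterOf i z k) := by
    intro a hak
    ext b
    simp only [Finset.mem_filter, Finset.mem_univ, true_and, Finset.mem_insert,
      Finset.mem_erase, hak, clusterOf, and_true]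
    constructor
    · intro hb
      by_cases hbi : b = i
      · exact Or.inl hbi
      · exact Or.inr ⟨hbi, by rw [← hwj b hbi]; exact hb⟩
    · rintro (rfl | ⟨hbi, hb⟩)
      · exact hwi
      · rw [hwj b hbi]; exact hb
  have hblockj : ∀ a, a ≠ i → z a ≠ k → Finset.univ.filter (fun b => w b = w a) =
      (Finset.univ.erase i).filter (fun j' => z j' = z a) := by
    intro a hai hak
    ext b
    simp only [Finset.mem_filter, Finset.mem_univ, true_and, Finset.mem_erase, and_true]
    constructor
    · intro hb
      have hbi : b ≠ i := by
        rintro rfl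
        rw [hwi, hwj a hai] at hb
        exact hak hb.symm
      rw [hwj b hbi, hwj a hai] at hb
      exact ⟨hbi, hb⟩
    · rintro ⟨hbi, hb⟩
      rw [hwj b hbi, hwj a hai]
      exact hb
  have hSk : ∀ a ∈ Finset.univ.erase i, z a = k →
      (Finset.univ.erase i).filter (fun j' => z j' = z a) = clusterOf i z k := by
    intro a _ hak
    rw [clusterOf]
    apply Finset.filter_congr
    intro b _
    simp [hak]
  apply Finset.Subset.antisymm
  · intro c hc
    obtain ⟨a, -, hac⟩ := Finset.mem_image.mp hc
    by_cases hak : w a = k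
    · rw [← hac, hblockk a hak]
      exact Finset.mem_insert_self _ _
    · have hai : a ≠ i := by rintro rfl; exact hak hwi
      have hazk : z a ≠ k := by rw [← hwj a hai]; exact hak
      rw [← hac, hblockj a hai hazk]
      apply Finset.mem_insert_of_mem
      rw [Finset.mem_erase]
      constructor
      · intro heq
        have haa : a ∈ (Finset.univ.erase i).filter (fun j' => z j' = z a) := by
          simp [Finset.mem_erase, hai]
        rw [heq] at haa
        exact hazk (Finset.mem_filter.mp haa).2
      · exact Finset.mem_image_of_mem _ (Finset.mem_erase.mpr ⟨hai, Finset.mem_univ a⟩)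
  · intro c hc
    rcases Finset.mem_insert.mp hc with rfl | hc'
    · rw [← hblockk i hwi]
      exact Finset.mem_image_of_mem _ (Finset.mem_univ i)
    · obtain ⟨hcne, hcmem⟩ := Finset.mem_erase.mp hc'
      obtain ⟨a, haS, hac⟩ := Finset.mem_image.mp hcmem
      have hai : a ≠ i := (Finset.mem_erase.mp haS).1
      have hazk : z a ≠ k := by
        intro h
        exact hcne (by rw [← hac, hSk a haS h])
      rw [← hac, ← hblockj a hai hazk]
      exact Finset.mem_image_of_mem _ (Finset.mem_univ a)

lemma clusterOf_mem_blocksOf (hk : ∃ j ∈ Finset.univ.erase i, z j = k) :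
    clusterOf i z k ∈ blocksOf i z := by
  obtain ⟨j₀, hj₀S, hj₀⟩ := hk
  rw [blocksOf, Finset.mem_image]
  refine ⟨j₀, hj₀S, ?_⟩
  rw [clusterOf]
  apply Finset.filter_congr
  intro b _
  simp [hj₀]

end

lemma Ew_update {n : ℕ} (g : Fin n → Fin n → ℝ) (hgsym : ∀ a b, g a b = g b a)
    (i : Fin n) (z : Fin n → ℕ) (k : ℕ) :
    Ew g (Function.update z i k) =
      (∑ a ∈ Finset.univ.erase i, ∑ b ∈ Finset.univ.erase i,
        if a < b ∧ z a = z b then g a b else 0) +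
      ∑ b ∈ Finset.univ.erase i, (if z b = k then g i b else 0) := by
  unfold Ew
  set w := Function.update z i k with hw
  have hwi : w i = k := Function.update_self i k z
  have hwj : ∀ j, j ≠ i → w j = z j := fun j hj => Function.update_of_ne hj k z
  set F : Fin n → Fin n → ℝ := fun a b => if a < b ∧ w a = w b then g a b else 0 with hF
  have split : ∀ h : Fin n → ℝ, ∑ a, h a = h i + ∑ a ∈ Finset.univ.erase i, h a :=
    fun h => (Finset.add_sum_erase Finset.univ h (Finset.mem_univ i)).symm
  have step1 : ∑ a : Fin n, ∑ b : Fin n, F a b =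
      (F i i + ∑ b ∈ Finset.univ.erase i, F i b) +
      ∑ a ∈ Finset.univ.erase i, (F a i + ∑ b ∈ Finset.univ.erase i, F a b) := by
    rw [split (fun a => ∑ b, F a b)]
    congr 1
    · exact split (F i)
    · exact Finset.sum_congr rfl (fun a _ => split (F a))
  have hFii : F i i = 0 := by
    rw [hF]
    simp [lt_irrefl]
  have hFab : ∀ a ∈ Finset.univ.erase i, ∀ b ∈ Finset.univ.erase i,
      F a b = if a < b ∧ z a = z b then g a b else 0 := by
    intro a ha b hb
    rw [hF]
    simp only []
    rw [hwj a (Finset.mem_erase.mp ha).1, hwj b (Finset.mem_erase.mp hb).1]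
  have hcross : ∀ b ∈ Finset.univ.erase i, F i b + F b i = if z b = k then g i b else 0 := by
    intro b hb
    have hbi : b ≠ i := (Finset.mem_erase.mp hb).1
    rw [hF]
    simp only []
    rw [hwi, hwj b hbi]
    rcases lt_or_gt_of_ne hbi with hlt | hgt
    · have h1 : ¬ (i < b) := by omega
      rw [if_neg (by tauto)]
      by_cases hzb : z b = k
      · rw [if_pos ⟨hlt, by rw [hzb]⟩, if_pos hzb, hgsym b i]
        ring
      · rw [if_neg (fun h => hzb h.2), if_neg hzb]
        ring
    · have h1 : ¬ (b < i) := by omega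
      by_cases hzb : z b = k
      · rw [if_pos ⟨hgt, hzb.symm⟩, if_neg (by tauto), if_pos hzb]
        ring
      · rw [if_neg (fun h => hzb h.2.symm), if_neg (by tauto), if_neg hzb]
        ring
  rw [step1, hFii, zero_add]
  have e1 : ∑ a ∈ Finset.univ.erase i, (F a i + ∑ b ∈ Finset.univ.erase i, F a b) =
      (∑ a ∈ Finset.univ.erase i, F a i) +
        ∑ a ∈ Finset.univ.erase i, ∑ b ∈ Finset.univ.erase i, F a b :=
    Finset.sum_add_distrib
  have e2 : ∑ a ∈ Finset.univ.erase i, ∑ b ∈ Finset.univ.erase i, F a b =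
      ∑ a ∈ Finset.univ.erase i, ∑ b ∈ Finset.univ.erase i,
        (if a < b ∧ z a = z b then g a b else 0) :=
    Finset.sum_congr rfl (fun a ha => Finset.sum_congr rfl (fun b hb => hFab a ha b hb))
  have e3 : ((∑ b ∈ Finset.univ.erase i, F i b) + ∑ a ∈ Finset.univ.erase i, F a i) =
      ∑ b ∈ Finset.univ.erase i, (if z b = k then g i b else 0) := by
    rw [← Finset.sum_add_distrib]
    exact Finset.sum_congr rfl hcross
  rw [e1, ← e2]
  linarith [e3]

/-- Pólya urn scheme for the MRF-constrained MFM (Theorem 1): the conditional prior of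
assigning point `i`, given the assignments `z_{−i}` of the remaining points, satisfies
`P(z_i = k | z_{−i}) ∝ (n_{k,−i} + α_0) exp(d Σ_{i'} g_{ii'} 1(z_{i'} = k))` for an
existing cluster `k`, and `∝ α_0 · V_n(|z_{−i}|+1)/V_n(|z_{−i}|)` for a new cluster. -/
theorem mrf_mfm_polya_urn (n : ℕ) (hn : 2 ≤ n) (α0 d lam : ℝ)
    (hα0 : 0 < α0) (hd : 0 ≤ d) (hlam : 0 < lam)
    (g : Fin n → Fin n → ℝ) (hg01 : ∀ i i', g i i' = 0 ∨ g i i' = 1)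
    (hgsym : ∀ i i', g i i' = g i' i) (hgdiag : ∀ i, g i i = 0)
    (i : Fin n) (z : Fin n → ℕ) :
    ∃ C : ℝ, 0 < C ∧
      (∀ k : ℕ, (∃ i' ∈ Finset.univ.erase i, z i' = k) →
        mrfMfmMass n α0 d lam g (partitionOf (Function.update z i k)) =
          C * (((((Finset.univ.erase i).filter (fun i' => z i' = k)).card : ℝ) + α0) *
            Real.exp (d * ∑ i' ∈ Finset.univ.erase i,
              g i i' * (if z i' = k then 1 else 0)))) ∧
      (∀ k : ℕ, (∀ i' ∈ Finset.univ.erase i, z i' ≠ k) →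
        mrfMfmMass n α0 d lam g (partitionOf (Function.update z i k)) =
          C * (α0 * Vcoef n α0 lam (((Finset.univ.erase i).image z).card + 1) /
            Vcoef n α0 lam ((Finset.univ.erase i).image z).card)) := by
  classical
  set S := Finset.univ.erase i with hSdef
  set t := (S.image z).card with hT
  set B := ∏ c ∈ blocksOf i z, risingGamma α0 c.card with hBdef
  set Em := ∑ a ∈ S, ∑ b ∈ S, (if a < b ∧ z a = z b then g a b else 0) with hEmdef
  have hScard : S.card = n - 1 := by
    rw [hSdef, Finset.card_erase_of_mem (Finset.mem_univ i), Finset.card_univ,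
      Fintype.card_fin]
  have ht : t ≤ n := by
    have := Finset.card_image_le (s := S) (f := z)
    omega
  have hV : 0 < Vcoef n α0 lam t := Vcoef_pos n hα0 hlam ht
  have hB : 0 < B := Finset.prod_pos (fun c _ => risingGamma_pos hα0 _)
  have hE : 0 < Real.exp (d * Em) := Real.exp_pos _
  refine ⟨Vcoef n α0 lam t * (B * Real.exp (d * Em)), by positivity, ?_, ?_⟩
  · -- existing cluster
    intro k hk
    have hpart := partition_update_existing i z k hk
    have hSkmem : clusterOf i z k ∈ blocksOf i z := clusterOf_mem_blocksOf i z k hk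
    have hiSk : i ∉ clusterOf i z k := by
      intro h
      exact (Finset.mem_erase.mp (Finset.mem_filter.mp h).1).1 rfl
    have hnotmem : insert i (clusterOf i z k) ∉ (blocksOf i z).erase (clusterOf i z k) :=
      fun h => not_mem_blocksOf i z (Finset.mem_of_mem_erase h) (Finset.mem_insert_self i _)
    have hbt : (blocksOf i z).card = t := by
      rw [card_blocksOf i z, hT, hSdef]
    have htpos : 1 ≤ t := hbt ▸ Finset.card_pos.mpr ⟨_, hSkmem⟩
    have hcard : (partitionOf (Function.update z i k)).card = t := by
      rw [hpart, Finset.card_insert_of_notMem hnotmem, Finset.card_erase_of_mem hSkmem, hbt]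
      omega
    have hprod : ∏ c ∈ partitionOf (Function.update z i k), risingGamma α0 c.card =
        (α0 + ((clusterOf i z k).card : ℝ)) * B := by
      rw [hpart, Finset.prod_insert hnotmem, Finset.card_insert_of_notMem hiSk,
        risingGamma_succ hα0, hBdef,
        ← Finset.mul_prod_erase (blocksOf i z) (fun c => risingGamma α0 c.card) hSkmem]
      ring
    have hEw : Ew g (Function.update z i k) =
        Em + ∑ b ∈ S, (if z b = k then g i b else 0) :=
      Ew_update g hgsym i z k
    have hsum : ∑ b ∈ S, (if z b = k then g i b else 0) =
        ∑ i' ∈ S, g i i' * (if z i' = k then 1 else 0) := by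
      apply Finset.sum_congr rfl
      intro b _
      by_cases hb : z b = k <;> simp [hb]
    have hfil : (S.filter (fun i' => z i' = k)) = clusterOf i z k := rfl
    rw [mass_formula n α0 d lam hα0 g (Function.update z i k), hcard, hprod, hEw, hsum,
      mul_add, Real.exp_add, hfil]
    ring
  · -- new cluster
    intro k hk
    have hpart := partition_update_new i z k hk
    have hnotmem : ({i} : Finset (Fin n)) ∉ blocksOf i z :=
      fun h => not_mem_blocksOf i z h (Finset.mem_singleton_self i)
    have hbt : (blocksOf i z).card = t := by
      rw [card_blocksOf i z, hT, hSdef]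
    have hcard : (partitionOf (Function.update z i k)).card = t + 1 := by
      rw [hpart, Finset.card_insert_of_notMem hnotmem, hbt]
    have hprod : ∏ c ∈ partitionOf (Function.update z i k), risingGamma α0 c.card =
        α0 * B := by
      rw [hpart, Finset.prod_insert hnotmem, Finset.card_singleton, risingGamma_one hα0]
    have hEw : Ew g (Function.update z i k) = Em := by
      rw [Ew_update g hgsym i z k, ← hEmdef]
      have hz : ∑ b ∈ S, (if z b = k then g i b else 0) = 0 := by
        apply Finset.sum_eq_zero
        intro b hb
        rw [if_neg (hk b hb)]
      rw [hz, add_zero]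
    rw [mass_formula n α0 d lam hα0 g (Function.update z i k), hcard, hprod, hEw]
    field_simp
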